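/- Let C be a free semi-theory, P the initial semi-theory, and J_C : P → C the unique morphism of semi-theories. Then the left Kan extension functor (J_C)_* : SSet^P → SSet^C preserves objectwise monomorphisms and objectwise weak equivalences: if f : X → Y in SSet^P has each component a monomorphism (respectively, a weak equivalence of simplicial sets), then each component of (J_C)_* f is a monomorphism (respectively, a weak equivalence of simplicial sets). -/

import Mathlib

open CategoryTheory Limits Topology Topology.Homotopy

noncomputable section

namespace SemiThPaper

/-! ### Weak homotopy equivalences -/

/-- The map induced by a continuous map on homotopy "groups" (sets for `N = Fin 0`). -/
def HomotopyGroup.map {X Y : Type} [TopologicalSpace X] [TopologicalSpace Y]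
    (f : C(X, Y)) (N : Type) (x : X) :
    HomotopyGroup N X x → HomotopyGroup N Y (f x) :=
  Quotient.map
    (fun g => ⟨f.comp g.1, fun y hy => by
      simp only [ContinuousMap.comp_apply]
      rw [g.2 y hy]⟩)
    (fun g h H => H.elim fun H => ⟨H.compContinuousMap f⟩)

/-- The map induced on path components. -/
def ZerothHomotopy.map {X Y : Type} [TopologicalSpace X] [TopologicalSpace Y]
    (f : C(X, Y)) : ZerothHomotopy X → ZerothHomotopy Y :=
  Quotient.map f (fun _ _ h => h.elim fun γ => ⟨γ.map f.continuous⟩)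

/-- A weak homotopy equivalence of topological spaces: a continuous map inducing a
bijection on path components and on all homotopy groups at all basepoints. -/
def IsWeakHomotopyEquiv {X Y : TopCat} (f : X ⟶ Y) : Prop :=
  Function.Bijective (ZerothHomotopy.map (f.hom : C(X, Y))) ∧
    ∀ (n : ℕ) (x : X), Function.Bijective (HomotopyGroup.map (f.hom : C(X, Y)) (Fin n) x)

/-- A weak equivalence of simplicial sets: a map whose geometric realization is a
weak homotopy equivalence. -/
def WeakEquiv {A B : SSet} (f : A ⟶ B) : Prop :=
  IsWeakHomotopyEquiv (SSet.toTop.map f)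


/-! ### Semi-theories -/

/-- The objects `[1], [2], [3], …` of a semi-theory, indexed by positive integers. -/
@[ext]
structure Ob : Type where
  val : ℕ+

instance : Coe ℕ+ Ob := ⟨Ob.mk⟩

/-- An (unpointed) semi-theory: a category with objects `[1], [2], …`
together with distinguished projection morphisms `p^n_k : [n] ⟶ [1]`, where `p^1_1 = 𝟙 [1]`. -/
structure SemiTheory : Type 1 where
  cat : Category.{0, 0} Ob
  proj : ∀ n : ℕ+, Fin n → @Quiver.Hom Ob cat.toCategoryStruct.toQuiver ⟨n⟩ ⟨1⟩
  proj_one : proj 1 ⟨0, Nat.one_pos⟩ = cat.toCategoryStruct.id ⟨1⟩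

/-- The category of diagrams of simplicial sets over (the underlying category of)
a semi-theory. -/
abbrev SemiTheory.Diag (S : SemiTheory) : Type 1 :=
  @CategoryTheory.Functor Ob S.cat SSet _

/-- The `n`-fold levelwise power of a simplicial set. -/
@[simps]
def finPow (n : ℕ+) (A : SSet) : SSet where
  obj m := Fin n → A.obj m
  map θ := TypeCat.ofHom fun a k => A.map θ (a k)

/-- The canonical comparison map `X[n] ⟶ X[1]^n` of a diagram over a semi-theory,
whose components are induced by the projections. -/
def SemiTheory.projFan (S : SemiTheory) (X : S.Diag) (n : ℕ+) :
    (letI := S.cat; (X.obj ⟨n⟩ ⟶ finPow n (X.obj ⟨1⟩))) :=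
  letI := S.cat
  { app := fun m => TypeCat.ofHom fun a k => (X.map (S.proj n k)).app m a
    naturality := fun m m' θ => by
      apply ConcreteCategory.hom_ext; intro a
      funext k
      exact NatTrans.naturality_apply (X.map (S.proj n k)) θ a }

/-- A strict algebra over a semi-theory: the comparison maps `X[n] ⟶ X[1]^n` are
isomorphisms for all `n > 1`. -/
def SemiTheory.IsStrictAlgebra (S : SemiTheory) (X : S.Diag) : Prop :=
  ∀ n : ℕ+, 1 < (n : ℕ) → IsIso (S.projFan X n)

/-- A homotopy algebra over a semi-theory: the comparison maps `X[n] ⟶ X[1]^n` are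
weak equivalences of simplicial sets for all `n > 1`. -/
def SemiTheory.IsHomotopyAlgebra (S : SemiTheory) (X : S.Diag) : Prop :=
  ∀ n : ℕ+, 1 < (n : ℕ) → WeakEquiv (S.projFan X n)

/-- A semi-theory is an algebraic theory if composition with the projections induces
bijections `Hom([m],[n]) ≅ Hom([m],[1])^n` for all `m` and all `n > 1`. -/
def SemiTheory.IsAlgebraic (S : SemiTheory) : Prop :=
  letI := S.cat
  ∀ (m n : ℕ+), 1 < (n : ℕ) →
    Function.Bijective (fun (f : (⟨m⟩ : Ob) ⟶ ⟨n⟩) (k : Fin n) => f ≫ S.proj n k)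

/-- The comparison map `X[n] ⟶ X[1]^n` for a diagram of simplicial sets over any
category equipped with objects `[n]` and projection morphisms. -/
def projFanAt {C : Type} [Category.{0} C] (o : ℕ+ → C) (p : ∀ n : ℕ+, Fin n → (o n ⟶ o 1))
    (X : C ⥤ SSet) (n : ℕ+) : X.obj (o n) ⟶ finPow n (X.obj (o 1)) where
  app m := TypeCat.ofHom fun a k => (X.map (p n k)).app m a
  naturality m m' θ := by
    apply ConcreteCategory.hom_ext; intro a
    funext k
    exact NatTrans.naturality_apply (X.map (p n k)) θ a

/-- Strictness of a diagram with respect to given objects and projections. -/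
def IsStrictAt {C : Type} [Category.{0} C] (o : ℕ+ → C)
    (p : ∀ n : ℕ+, Fin n → (o n ⟶ o 1)) (X : C ⥤ SSet) : Prop :=
  ∀ n : ℕ+, 1 < (n : ℕ) → IsIso (projFanAt o p X n)

/-- The homotopy-algebra condition for a diagram with respect to given objects
and projections. -/
def IsHomotopyAt {C : Type} [Category.{0} C] (o : ℕ+ → C)
    (p : ∀ n : ℕ+, Fin n → (o n ⟶ o 1)) (X : C ⥤ SSet) : Prop :=
  ∀ n : ℕ+, 1 < (n : ℕ) → WeakEquiv (projFanAt o p X n)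

/-! ### Free semi-theories -/

/-- Generating data for a free semi-theory: a family of free generators that are
not projections (the projections are added separately as free generators). -/
structure GenData : Type 1 where
  gen : ℕ+ → ℕ+ → Type

/-- The generating quiver of the free semi-theory on `G`: the generators of `G`
together with projection arrows `p^n_k : [n] → [1]` for `n > 1`
(the projection `p^1_1` is the identity, i.e. the empty path). -/
inductive Arr (G : GenData) : ℕ+ → ℕ+ → Type
  | gen {a b : ℕ+} : G.gen a b → Arr G a b
  | proj {n : ℕ+} (h : 1 < (n : ℕ)) (k : Fin n) : Arr G n 1

/-- The object type of the free semi-theory on `G` (a copy of `Ob`). -/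
def FreeOb (G : GenData) : Type := Ob

instance freeQuiver (G : GenData) : Quiver (FreeOb G) :=
  ⟨fun a b => Arr G (Ob.val a) (Ob.val b)⟩

/-- The free semi-theory on `G`, as a category: the paths category on the
generating quiver. -/
abbrev FreeST (G : GenData) := CategoryTheory.Paths (FreeOb G)

/-- The object `[n]` of the free semi-theory. -/
def FreeST.of (G : GenData) (n : ℕ+) : FreeST G := (⟨n⟩ : Ob)

/-- The generating projection arrow, as an arrow of the generating quiver. -/
def projArr (G : GenData) {n : ℕ+} (h : 1 < (n : ℕ)) (k : Fin n) :
    @Quiver.Hom (FreeOb G) _ (FreeST.of G n) (FreeST.of G 1) := Arr.proj h k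

/-- The projection `p^n_k` in the free semi-theory. -/
def projPath (G : GenData) (n : ℕ+) (k : Fin n) : FreeST.of G n ⟶ FreeST.of G 1 :=
  if h : 1 < (n : ℕ) then (projArr G h k).toPath
  else eqToHom (congrArg (FreeST.of G)
    (PNat.coe_injective (by
      rw [PNat.one_coe]
      exact le_antisymm (not_lt.1 h) n.pos)))

/-- The free semi-theory on `G`, as a semi-theory. -/
def freeSemiTheory (G : GenData) : SemiTheory where
  cat := inferInstanceAs (Category (FreeST G))
  proj n k := projPath G n k
  proj_one := by
    show projPath G 1 ⟨0, Nat.one_pos⟩ = _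
    rw [projPath, dif_neg (by norm_num)]
    rfl

/-- The initial semi-theory `P` has no generators besides the projections. -/
def emptyGen : GenData := ⟨fun _ _ => PEmpty⟩

/-- The underlying category of the initial semi-theory `P`. -/
abbrev PCat := FreeST emptyGen

/-- The initial semi-theory `P`: its only non-identity morphisms are the projections. -/
def PTheory : SemiTheory := freeSemiTheory emptyGen

/-- The action of the unique morphism of semi-theories `P ⟶ C` on generating arrows. -/
def jArr (G : GenData) : ∀ {a b : ℕ+}, Arr emptyGen a b →
    @Quiver.Path (FreeOb G) _ ((⟨a⟩ : Ob) : FreeST G) ((⟨b⟩ : Ob) : FreeST G)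
  | _, _, .gen α => α.elim
  | _, _, .proj h k => (projArr G h k).toPath

/-- The unique morphism of semi-theories `P ⟶ C` into a free semi-theory. -/
def Jfree (G : GenData) : PCat ⥤ FreeST G :=
  Paths.lift
    { obj := fun n => (n : FreeST G)
      map := fun {a b} e => jArr G e }

/-! ### The completion of a free semi-theory -/

/-- Trees representing the morphisms `[n] ⟶ [1]` of the completion `C̄` of a free
semi-theory: either a single edge labelled by a projection `p^n_k`, or a tree whose
lowest edge is labelled by a component `α_i` of a non-projection generator
`α : [m] ⟶ [r]` and which is obtained by grafting `m` smaller trees. -/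
inductive CTree (G : GenData) (n : ℕ+) : Type
  | proj (k : Fin n) : CTree G n
  | node {m r : ℕ+} (α : G.gen m r) (i : Fin r) (ts : Fin m → CTree G n) : CTree G n

/-- Morphisms `[n] ⟶ [m]` in the completion: `m`-tuples of trees. -/
def CompHom (G : GenData) (n m : ℕ+) : Type := Fin m → CTree G n

/-- Grafting: substituting the trees `T k` for the initial edges labelled `p^m_k`. -/
def CTree.graft {G : GenData} {n m : ℕ+} : CTree G m → CompHom G n m → CTree G n
  | .proj k, T => T k
  | .node α i ts, T => .node α i (fun j => (ts j).graft T)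

/-- The identity of the completion. -/
def compId (G : GenData) (n : ℕ+) : CompHom G n n := fun k => .proj k

/-- Composition in the completion, by grafting. -/
def compComp {G : GenData} {a b c : ℕ+} (T : CompHom G a b) (S : CompHom G b c) :
    CompHom G a c :=
  fun j => (S j).graft T

theorem CTree.graft_id {G : GenData} {m : ℕ+} (t : CTree G m) :
    t.graft (compId G m) = t := by
  induction t with
  | proj k => rfl
  | node α i ts ih =>
      simp only [CTree.graft]
      congr 1
      funext j
      exact ih j

theorem CTree.graft_graft {G : GenData} {a b c : ℕ+} (s : CTree G c)
    (U : CompHom G b c) (T : CompHom G a b) :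
    (s.graft U).graft T = s.graft (compComp T U) := by
  induction s with
  | proj k => rfl
  | node α i ts ih =>
      simp only [CTree.graft]
      congr 1
      funext j
      exact ih j

/-- The object type of the completion (a copy of `Ob`). -/
def CompOb (G : GenData) : Type := Ob

/-- The completion `C̄` of a free semi-theory, as a category. -/
instance compCategory (G : GenData) : Category (CompOb G) where
  Hom n m := CompHom G (Ob.val n) (Ob.val m)
  id n := compId G _
  comp f g := compComp f g
  id_comp f := funext fun j => CTree.graft_id _
  comp_id f := rfl
  assoc f g h := funext fun j => (CTree.graft_graft _ _ _).symm

/-- The object `[n]` of the completion. -/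
def CompOb.of (G : GenData) (n : ℕ+) : CompOb G := (⟨n⟩ : Ob)

/-- The projection `p̂^n_k` of the completion: a single edge labelled `p^n_k`. -/
def compProj (G : GenData) (n : ℕ+) (k : Fin n) : CompOb.of G n ⟶ CompOb.of G 1 :=
  fun _ => .proj k

/-- The completion, as a semi-theory. -/
def compSemiTheory (G : GenData) : SemiTheory where
  cat := inferInstanceAs (Category (CompOb G))
  proj n k := compProj G n k
  proj_one := by
    funext i
    have h0 : i = ⟨0, Nat.one_pos⟩ := Fin.ext (Nat.lt_one_iff.mp i.isLt)
    rw [h0]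
    rfl

/-- The completion functor `Φ` on generating arrows. -/
def phiArr (G : GenData) : ∀ {a b : ℕ+}, Arr G a b → CompHom G a b
  | _, _, .gen α => fun i => .node α i (fun k => .proj k)
  | _, _, .proj _ k => fun _ => .proj k

/-- The completion functor `Φ_C : C ⟶ C̄` of a free semi-theory. -/
def phi (G : GenData) : FreeST G ⥤ CompOb G :=
  Paths.lift
    { obj := fun n => (n : CompOb G)
      map := fun {a b} e => phiArr G e }

/-! ### Discrete simplicial sets, products, mapping complexes -/

/-- The discrete simplicial set on a type. -/
@[simps]
def disc (A : Type) : SSet where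
  obj _ := A
  map _ := TypeCat.ofHom id

/-- The map of discrete simplicial sets induced by a function. -/
@[simps]
def disc.map {A B : Type} (f : A → B) : disc A ⟶ disc B where
  app _ := TypeCat.ofHom f

/-- The diagram of (discrete) simplicial sets corepresented by the object `[n]`
of a semi-theory. -/
def SemiTheory.corep (S : SemiTheory) (n : ℕ+) : S.Diag :=
  letI := S.cat
  { obj := fun m => disc ((⟨n⟩ : Ob) ⟶ m)
    map := fun f => disc.map (fun g => g ≫ f)
    map_id := fun m => by
      apply NatTrans.ext
      funext x; apply ConcreteCategory.hom_ext; intro g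
      show g ≫ 𝟙 m = g
      exact Category.comp_id (X := (⟨n⟩ : Ob)) g
    map_comp := fun f f' => by
      apply NatTrans.ext
      funext x; apply ConcreteCategory.hom_ext; intro g
      show g ≫ (_ ≫ _) = (g ≫ _) ≫ _
      exact (Category.assoc (W := (⟨n⟩ : Ob)) g _ _).symm }

/-- Levelwise product of two simplicial sets. -/
@[simps]
def mulC (A K : SSet) : SSet where
  obj m := A.obj m × K.obj m
  map θ := TypeCat.ofHom fun p => (A.map θ p.1, K.map θ p.2)
  map_id m := by apply ConcreteCategory.hom_ext; intro p; simp
  map_comp f g := by apply ConcreteCategory.hom_ext; intro p; simp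

/-- `f × id` on levelwise products. -/
@[simps]
def mulC.mapLeft {A B : SSet} (f : A ⟶ B) (K : SSet) : mulC A K ⟶ mulC B K where
  app m := TypeCat.ofHom fun p => (f.app m p.1, p.2)
  naturality m m' θ := by
    apply ConcreteCategory.hom_ext; intro p
    show (f.app m' (A.map θ p.1), K.map θ p.2) = (B.map θ (f.app m p.1), K.map θ p.2)
    rw [NatTrans.naturality_apply]

/-- `id × g` on levelwise products. -/
@[simps]
def mulC.mapRight (A : SSet) {K L : SSet} (g : K ⟶ L) : mulC A K ⟶ mulC A L where
  app m := TypeCat.ofHom fun p => (p.1, g.app m p.2)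
  naturality m m' θ := by
    apply ConcreteCategory.hom_ext; intro p
    show (A.map θ p.1, g.app m' (K.map θ p.2)) = (A.map θ p.1, L.map θ (g.app m p.2))
    rw [NatTrans.naturality_apply]

theorem mulC.mapRight_id (A K : SSet) : mulC.mapRight A (𝟙 K) = 𝟙 (mulC A K) := by
  apply NatTrans.ext; funext x; apply ConcreteCategory.hom_ext; intro p; rfl

theorem mulC.mapRight_comp (A : SSet) {K L M : SSet} (g : K ⟶ L) (h : L ⟶ M) :
    mulC.mapRight A (g ≫ h) = mulC.mapRight A g ≫ mulC.mapRight A h := by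
  apply NatTrans.ext; funext x; apply ConcreteCategory.hom_ext; intro p; rfl

/-- Naturality, in applied form. -/
theorem natApply {C : Type} [Category C] {X Y : C ⥤ SSet} (f : X ⟶ Y)
    {c c' : C} (φ : c ⟶ c') (x : SimplexCategoryᵒᵖ) (a : (X.obj c).obj x) :
    (f.app c').app x ((X.map φ).app x a) = (Y.map φ).app x ((f.app c).app x a) :=
  types_congr_hom (NatTrans.congr_app (f.naturality φ) x) a

/-- The objectwise product of a diagram of simplicial sets with a constant
simplicial set. -/
@[simps]
def prodConst {C : Type} [Category C] (X : C ⥤ SSet) (K : SSet) : C ⥤ SSet where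
  obj c := mulC (X.obj c) K
  map f := mulC.mapLeft (X.map f) K
  map_id c := by
    apply NatTrans.ext; funext x; apply ConcreteCategory.hom_ext; intro p
    show ((X.map (𝟙 c)).app x p.1, p.2) = p
    rw [X.map_id]
    rfl
  map_comp f g := by
    apply NatTrans.ext; funext x; apply ConcreteCategory.hom_ext; intro p
    show ((X.map (f ≫ g)).app x p.1, p.2) = _
    rw [X.map_comp]
    rfl

/-- Functoriality of `prodConst` in the diagram variable. -/
@[simps]
def prodConst.mapX {C : Type} [Category C] {X X' : C ⥤ SSet} (f : X ⟶ X') (K : SSet) :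
    prodConst X K ⟶ prodConst X' K where
  app c := mulC.mapLeft (f.app c) K
  naturality c c' φ := by
    apply NatTrans.ext; funext x; apply ConcreteCategory.hom_ext; intro p
    simp only [prodConst_obj, prodConst_map, NatTrans.comp_app, mulC.mapLeft_app,
      types_comp_apply]
    exact Prod.ext (natApply f φ x p.1) rfl

/-- Functoriality of `prodConst` in the constant variable. -/
@[simps]
def prodConst.mapK {C : Type} [Category C] (X : C ⥤ SSet) {K L : SSet} (g : K ⟶ L) :
    prodConst X K ⟶ prodConst X L where
  app c := mulC.mapRight (X.obj c) g
  naturality c c' φ := by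
    apply NatTrans.ext; funext x; apply ConcreteCategory.hom_ext; intro p
    rfl

theorem prodConst.mapK_id {C : Type} [Category C] (X : C ⥤ SSet) (K : SSet) :
    prodConst.mapK X (𝟙 K) = 𝟙 (prodConst X K) := by
  apply NatTrans.ext; funext c
  exact mulC.mapRight_id _ _

theorem prodConst.mapK_comp {C : Type} [Category C] (X : C ⥤ SSet) {K L M : SSet}
    (g : K ⟶ L) (h : L ⟶ M) :
    prodConst.mapK X (g ≫ h) = prodConst.mapK X g ≫ prodConst.mapK X h := by
  apply NatTrans.ext; funext c
  exact mulC.mapRight_comp _ _ _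

/-- The standard simplex `Δ[k]`, for `k : SimplexCategoryᵒᵖ`. -/
def stdS (k : SimplexCategoryᵒᵖ) : SSet := SSet.stdSimplex.obj k.unop

/-- Functoriality of the standard simplex (contravariantly in `SimplexCategoryᵒᵖ`). -/
def stdMap {k l : SimplexCategoryᵒᵖ} (θ : k ⟶ l) : stdS l ⟶ stdS k :=
  SSet.stdSimplex.map θ.unop

theorem stdMap_id (k : SimplexCategoryᵒᵖ) : stdMap (𝟙 k) = 𝟙 (stdS k) :=
  SSet.stdSimplex.map_id _

theorem stdMap_comp {k l m : SimplexCategoryᵒᵖ} (θ : k ⟶ l) (η : l ⟶ m) :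
    stdMap (θ ≫ η) = stdMap η ≫ stdMap θ :=
  SSet.stdSimplex.map_comp _ _

/-- The simplicial mapping complex of two diagrams of simplicial sets: its
`m`-simplices are the natural transformations `X × Δ[m] ⟶ Y`. -/
def MapCx {C : Type} [Category C] (X Y : C ⥤ SSet) : SSet where
  obj m := prodConst X (stdS m) ⟶ Y
  map {m m'} θ := TypeCat.ofHom fun t => prodConst.mapK X (stdMap θ) ≫ t
  map_id m := by
    apply ConcreteCategory.hom_ext; intro t
    simp [stdMap_id, prodConst.mapK_id]
  map_comp θ η := by
    apply ConcreteCategory.hom_ext; intro t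
    simp [stdMap_comp, prodConst.mapK_comp]

/-- Precomposition on mapping complexes. -/
def MapCx.pre {C : Type} [Category C] {X X' : C ⥤ SSet} (f : X' ⟶ X) (Y : C ⥤ SSet) :
    MapCx X Y ⟶ MapCx X' Y where
  app m := TypeCat.ofHom fun t => prodConst.mapX f (stdS m) ≫ t
  naturality m m' θ := by
    apply ConcreteCategory.hom_ext; intro t
    rfl

/-- Postcomposition on mapping complexes. -/
def MapCx.post {C : Type} [Category C] (X : C ⥤ SSet) {Y Y' : C ⥤ SSet} (g : Y ⟶ Y') :
    MapCx X Y ⟶ MapCx X Y' where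
  app m := TypeCat.ofHom fun t => t ≫ g
  naturality m m' θ := by
    apply ConcreteCategory.hom_ext; intro t
    rfl

/-- Restriction of mapping complexes along a functor. -/
def MapCx.whisk {C D : Type} [Category C] [Category D] (F : D ⥤ C) (X Y : C ⥤ SSet) :
    MapCx X Y ⟶ MapCx (F ⋙ X) (F ⋙ Y) where
  app m := TypeCat.ofHom fun t =>
    (show prodConst (F ⋙ X) (stdS m) ⟶ F ⋙ Y from CategoryTheory.Functor.whiskerLeft F t)
  naturality m m' θ := by
    apply ConcreteCategory.hom_ext; intro t
    rfl

/-- The simplicial mapping complex of two simplicial sets: its `m`-simplices are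
the maps `A × Δ[m] ⟶ B`. -/
def sMap (A B : SSet) : SSet where
  obj m := mulC A (stdS m) ⟶ B
  map {m m'} θ := TypeCat.ofHom fun t => mulC.mapRight A (stdMap θ) ≫ t
  map_id m := by
    apply ConcreteCategory.hom_ext; intro t
    simp [stdMap_id, mulC.mapRight_id]
  map_comp θ η := by
    apply ConcreteCategory.hom_ext; intro t
    simp [stdMap_comp, mulC.mapRight_comp]

/-- Precomposition on simplicial mapping complexes. -/
def sMap.pre {A A' : SSet} (f : A' ⟶ A) (B : SSet) : sMap A B ⟶ sMap A' B where
  app m := TypeCat.ofHom fun t => mulC.mapLeft f (stdS m) ≫ t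
  naturality m m' θ := by
    apply ConcreteCategory.hom_ext; intro t
    rfl

/-- Postcomposition on simplicial mapping complexes. -/
def sMap.post (A : SSet) {B B' : SSet} (g : B ⟶ B') : sMap A B ⟶ sMap A B' where
  app m := TypeCat.ofHom fun t => t ≫ g
  naturality m m' θ := by
    apply ConcreteCategory.hom_ext; intro t
    rfl

/-! ### Decompositions of morphisms of a free semi-theory -/

/-- Whether a generating arrow is a generator of `G` (as opposed to a projection). -/
def Arr.isGen {G : GenData} : ∀ {a b : ℕ+}, Arr G a b → Prop
  | _, _, .gen _ => True
  | _, _, .proj _ _ => False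

/-- A morphism `φ = α_k ∘ ⋯ ∘ α_1` of a free semi-theory (a path in the generating
quiver) starts with a non-projection: `α_1` is not a projection. -/
def startsNonProj {G : GenData} : ∀ {a b : FreeOb G}, Quiver.Path a b → Prop
  | _, _, .nil => False
  | _, _, .cons .nil e => Arr.isGen e
  | _, _, .cons (.cons p e') _ => startsNonProj (Quiver.Path.cons p e')

/-- The first `j` arrows of a path (together with their target). -/
def pathTake {V : Type} [Quiver.{1} V] {a : V} : ∀ {b : V}, Quiver.Path a b → ℕ → Σ c : V, Quiver.Path a c
  | _, .nil, _ => ⟨a, .nil⟩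
  | b, .cons p e, j => if j ≤ p.length then pathTake p j else ⟨b, .cons p e⟩

/-! ### The diagram `D̄_n` and its filtrations -/

/-- The `D`-diagram `D̄_n` with `D̄_n[m] = Hom_{D̄}([n],[m])`, where the `D`-action
is given by composition via the completion functor `Φ`. -/
def barDn (G : GenData) (n : ℕ+) : FreeST G ⥤ SSet where
  obj m := disc (CompOb.of G n ⟶ (phi G).obj m)
  map {a b} ψ := disc.map (fun T => T ≫ (phi G).map ψ)
  map_id a := by
    apply NatTrans.ext
    funext x; apply ConcreteCategory.hom_ext; intro T
    show T ≫ (phi G).map (𝟙 a) = T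
    rw [CategoryTheory.Functor.map_id]; exact Category.comp_id _
  map_comp {a b c} ψ ψ' := by
    apply NatTrans.ext
    funext x; apply ConcreteCategory.hom_ext; intro T
    show T ≫ (phi G).map (ψ ≫ ψ') = (T ≫ (phi G).map ψ) ≫ (phi G).map ψ'
    rw [CategoryTheory.Functor.map_comp]; exact (Category.assoc _ _ _).symm

/-- The filtration of `D̄_n` by sub-`D`-diagrams:
`D̄_n^0 = D_n` (the image of the corepresented diagram) and `D̄_n^{k+1}` is the
smallest sub-`D`-diagram containing all tuples of elements of `D̄_n^k[1]`. -/
def Filt (G : GenData) (n : ℕ+) : ℕ → ∀ m : ℕ+, Set (CompHom G n m)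
  | 0, m => {T | ∃ ψ : FreeST.of G n ⟶ FreeST.of G m, T = (phi G).map ψ}
  | k+1, m => {T | ∃ (m' : ℕ+) (S : CompHom G n m')
      (ψ : FreeST.of G m' ⟶ FreeST.of G m),
      (∀ j : Fin m', (fun _ : Fin 1 => S j) ∈ Filt G n k 1) ∧
        T = (S : CompOb.of G n ⟶ CompOb.of G m') ≫ (phi G).map ψ}

/-- The filtration of `D̄_n` by sub-`P`-diagrams: `sD̄_n^0 = D_n` and `sD̄_n^{k+1}` is
the smallest sub-`P`-diagram containing all tuples of elements of `D̄ₙ^k[1]`. -/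
def sFilt (G : GenData) (n : ℕ+) : ℕ → ∀ m : ℕ+, Set (CompHom G n m)
  | 0, m => Filt G n 0 m
  | k+1, m => {T | ∀ j : Fin m, (fun _ : Fin 1 => T j) ∈ Filt G n k 1}

theorem Filt.closed (G : GenData) (n : ℕ+) (k : ℕ) {a b : ℕ+}
    {T : CompOb.of G n ⟶ CompOb.of G a} (hT : T ∈ Filt G n k a)
    (ψ : FreeST.of G a ⟶ FreeST.of G b) : T ≫ (phi G).map ψ ∈ Filt G n k b := by
  cases k with
  | zero =>
      obtain ⟨ψ₀, rfl⟩ := hT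
      exact ⟨ψ₀ ≫ ψ, by rw [CategoryTheory.Functor.map_comp]; rfl⟩
  | succ k =>
      obtain ⟨m', S, ψ₁, hS, rfl⟩ := hT
      exact ⟨m', S, ψ₁ ≫ ψ, hS, by rw [CategoryTheory.Functor.map_comp]; exact Category.assoc _ _ _⟩

theorem phi_map_toPath (G : GenData) {a b : FreeOb G}
    (e : @Quiver.Hom (FreeOb G) _ a b) :
    (phi G).map e.toPath = phiArr G e :=
  Paths.lift_toPath _ _

theorem Filt.comp_proj (G : GenData) (n : ℕ+) (k : ℕ) {m : ℕ+} {T : CompHom G n m}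
    (hT : T ∈ Filt G n k m) (j : Fin m) : (fun _ : Fin 1 => T j) ∈ Filt G n k 1 := by
  by_cases h : 1 < (m : ℕ)
  · have hc := Filt.closed G n k hT (projPath G m j)
    have he : (T : CompOb.of G n ⟶ CompOb.of G m) ≫ (phi G).map (projPath G m j)
        = (fun _ : Fin 1 => T j) := by
      unfold projPath
      rw [dif_pos h]
      rw [phi_map_toPath G (projArr G h j)]
      rfl
    exact he ▸ hc
  · have hm : m = 1 := PNat.coe_injective (by
      rw [PNat.one_coe]
      exact le_antisymm (not_lt.1 h) m.pos)
    subst hm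
    have ht : (fun _ : Fin 1 => T j) = T := by
      funext i
      congr 1
      exact Fin.ext (by
        rw [Nat.lt_one_iff.mp i.isLt, Nat.lt_one_iff.mp j.isLt])
    rwa [ht]

theorem sFilt.closed_arr (G : GenData) (n : ℕ+) (k : ℕ) {c b : ℕ+}
    {T : CompHom G n c} (hT : T ∈ sFilt G n k c) (e : Arr emptyGen c b) :
    (T : CompOb.of G n ⟶ CompOb.of G c) ≫ (phi G).map (jArr G e) ∈ sFilt G n k b := by
  cases e with
  | gen α => exact α.elim
  | proj h j =>
      have h1 : (phi G).map (jArr G (Arr.proj h j)) = phiArr G (Arr.proj h j) := by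
        show (phi G).map (projArr G h j).toPath = _
        exact phi_map_toPath G _
      rw [h1]
      show (fun _ : Fin 1 => T j) ∈ sFilt G n k 1
      cases k with
      | zero => exact Filt.comp_proj G n 0 hT j
      | succ k' => intro i; exact hT j

theorem sFilt.closed (G : GenData) (n : ℕ+) (k : ℕ) {a b : PCat}
    {T : CompOb.of G n ⟶ CompOb.of G (Ob.val a)} (hT : T ∈ sFilt G n k (Ob.val a))
    (ψ : a ⟶ b) :
    T ≫ (phi G).map ((Jfree G).map ψ) ∈ sFilt G n k (Ob.val b) := by
  change @Quiver.Path (FreeOb emptyGen) _ a b at ψ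
  induction ψ with
  | nil => exact hT
  | cons p e ih =>
      have h1 : (phi G).map ((Jfree G).map (Quiver.Path.cons p e))
          = (phi G).map ((Jfree G).map p) ≫ (phi G).map (jArr G e) := by
        exact (congrArg (phi G).map (Paths.lift_cons (V := FreeOb emptyGen) _ p e)).trans ((phi G).map_comp _ _)
      have h4 := sFilt.closed_arr G n k ih e
      have h5 := (congrArg (T ≫ ·) h1).trans (Category.assoc _ _ _).symm
      exact h5 ▸ h4

/-- The sub-`D`-diagram `D̄_n^k` of `D̄_n`. -/
def FiltDiag (G : GenData) (n : ℕ+) (k : ℕ) : FreeST G ⥤ SSet where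
  obj m := disc (Filt G n k (Ob.val m))
  map {a b} ψ := disc.map (fun T => ⟨T.1 ≫ (phi G).map ψ, Filt.closed G n k T.2 ψ⟩)
  map_id a := by
    apply NatTrans.ext
    funext x; apply ConcreteCategory.hom_ext; intro T
    apply Subtype.ext
    show T.1 ≫ (phi G).map (𝟙 a) = T.1
    rw [CategoryTheory.Functor.map_id]; exact Category.comp_id _
  map_comp {a b c} ψ ψ' := by
    apply NatTrans.ext
    funext x; apply ConcreteCategory.hom_ext; intro T
    apply Subtype.ext
    show T.1 ≫ (phi G).map (ψ ≫ ψ') = (T.1 ≫ (phi G).map ψ) ≫ (phi G).map ψ'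
    rw [CategoryTheory.Functor.map_comp]; exact (Category.assoc _ _ _).symm

/-- The sub-`P`-diagram `sD̄_n^k` of `D̄_n`. -/
def sFiltDiag (G : GenData) (n : ℕ+) (k : ℕ) : PCat ⥤ SSet where
  obj m := disc (sFilt G n k (Ob.val m))
  map {a b} ψ := disc.map (fun T => ⟨T.1 ≫ (phi G).map ((Jfree G).map ψ),
    sFilt.closed G n k T.2 ψ⟩)
  map_id a := by
    apply NatTrans.ext
    funext x; apply ConcreteCategory.hom_ext; intro T
    apply Subtype.ext
    show T.1 ≫ (phi G).map ((Jfree G).map (𝟙 a)) = T.1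
    rw [CategoryTheory.Functor.map_id, CategoryTheory.Functor.map_id]; exact Category.comp_id _
  map_comp {a b c} ψ ψ' := by
    apply NatTrans.ext
    funext x; apply ConcreteCategory.hom_ext; intro T
    apply Subtype.ext
    show T.1 ≫ (phi G).map ((Jfree G).map (ψ ≫ ψ')) =
      (T.1 ≫ (phi G).map ((Jfree G).map ψ)) ≫ (phi G).map ((Jfree G).map ψ')
    rw [CategoryTheory.Functor.map_comp, CategoryTheory.Functor.map_comp]
    exact (Category.assoc _ _ _).symm


theorem Filt.mono (G : GenData) (n : ℕ+) (k : ℕ) (m : ℕ+) :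
    Filt G n k m ⊆ Filt G n (k+1) m := by
  intro T hT
  exact ⟨m, T, 𝟙 _, fun j => Filt.comp_proj G n k hT j,
    by rw [CategoryTheory.Functor.map_id]; exact (Category.comp_id (obj := CompOb G) _).symm⟩

theorem Filt.subset_sFilt (G : GenData) (n : ℕ+) (k : ℕ) (m : ℕ+) :
    Filt G n k m ⊆ sFilt G n (k+1) m :=
  fun _ hT j => Filt.comp_proj G n k hT j

theorem sFilt.subset_Filt (G : GenData) (n : ℕ+) (k : ℕ) (m : ℕ+) :
    sFilt G n (k+1) m ⊆ Filt G n (k+1) m := by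
  intro T hT
  exact ⟨m, T, 𝟙 _, hT, by rw [CategoryTheory.Functor.map_id]; exact (Category.comp_id (obj := CompOb G) _).symm⟩

/-- Restriction of a `D`-diagram to a `P`-diagram. -/
def resP (G : GenData) (X : FreeST G ⥤ SSet) : PCat ⥤ SSet := Jfree G ⋙ X

/-- The inclusion `D̄_n^k ⟶ D̄_n^{k+1}` of sub-`D`-diagrams. -/
def filtIncl (G : GenData) (n : ℕ+) (k : ℕ) : FiltDiag G n k ⟶ FiltDiag G n (k+1) where
  app m := disc.map (Set.inclusion (Filt.mono G n k (Ob.val m)))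
  naturality a b ψ := by
    apply NatTrans.ext
    funext x; apply ConcreteCategory.hom_ext; intro T
    apply Subtype.ext
    rfl

/-- The inclusion `D̄_n^k ⟶ sD̄_n^{k+1}` of sub-`P`-diagrams. -/
def filtInclS (G : GenData) (n : ℕ+) (k : ℕ) :
    resP G (FiltDiag G n k) ⟶ sFiltDiag G n (k+1) where
  app m := disc.map (Set.inclusion (Filt.subset_sFilt G n k (Ob.val m)))
  naturality a b ψ := by
    apply NatTrans.ext
    funext x; apply ConcreteCategory.hom_ext; intro T
    apply Subtype.ext
    rfl

/-- The inclusion `sD̄_n^{k+1} ⟶ D̄_n^{k+1}` of sub-`P`-diagrams. -/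
def sFiltIncl (G : GenData) (n : ℕ+) (k : ℕ) :
    sFiltDiag G n (k+1) ⟶ resP G (FiltDiag G n (k+1)) where
  app m := disc.map (Set.inclusion (sFilt.subset_Filt G n k (Ob.val m)))
  naturality a b ψ := by
    apply NatTrans.ext
    funext x; apply ConcreteCategory.hom_ext; intro T
    apply Subtype.ext
    rfl



/-! ### Auxiliary: path lemmas -/

/-- The object `[n]` of the free semi-theory, as an element of `FreeOb`. -/
def fOb (G : GenData) (s : Ob) : FreeOb G := s

/-- An object of the free semi-theory, as an element of `FreeST G`. -/
def fST (G : GenData) (s : Ob) : FreeST G := s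

/-- An object of `P`, as an element of `PCat`. -/
def pST (s : Ob) : PCat := s

/-- A projection arrow with normalized endpoints. -/
def projArrOb (G : GenData) {a : Ob} (h : 1 < (Ob.val a : ℕ)) (k : Fin (Ob.val a)) :
    fOb G a ⟶ fOb G ⟨1⟩ :=
  Arr.proj h k

/-- A projection, as a morphism of the free semi-theory. -/
def projP (G : GenData) {a : Ob} (h : 1 < (Ob.val a : ℕ)) (k : Fin (Ob.val a)) :
    fST G a ⟶ fST G ⟨1⟩ :=
  (projArrOb G h k).toPath

/-- A projection, as a morphism of `P`. -/
def projPP {a : Ob} (h : 1 < (Ob.val a : ℕ)) (k : Fin (Ob.val a)) :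
    pST a ⟶ pST ⟨1⟩ :=
  (projArrOb emptyGen h k).toPath

/-- Whether a generating arrow is a projection. -/
def isProjArr {G : GenData} : ∀ {a b : ℕ+}, Arr G a b → Prop
  | _, _, .gen _ => False
  | _, _, .proj _ _ => True

theorem isProjArr_split {G : GenData} {m r : ℕ+} (e : Arr G m r) (hp : isProjArr e) :
    ∃ (h : 1 < (m : ℕ)) (k : Fin m) (_ : (r : ℕ+) = 1), HEq e (Arr.proj (G := G) h k) := by
  cases e with
  | gen g => exact hp.elim
  | proj h k => exact ⟨h, k, rfl, HEq.rfl⟩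

/-- A path starts with a projection arrow. -/
def leadProj {G : GenData} : ∀ {a b : FreeOb G}, Quiver.Path a b → Prop
  | _, _, .nil => False
  | _, _, .cons .nil e => isProjArr e
  | _, _, .cons (.cons p e') _ => leadProj (Quiver.Path.cons p e')

theorem leadProj_nil {G : GenData} {a : FreeOb G} :
    leadProj (Quiver.Path.nil : Quiver.Path a a) = False := by
  simp [leadProj]

theorem leadProj_single {G : GenData} {a b : FreeOb G} (e : a ⟶ b) :
    leadProj ((Quiver.Path.nil : Quiver.Path a a).cons e) = isProjArr e := by
  simp [leadProj]

theorem leadProj_cons_cons {G : GenData} {a b b' c : FreeOb G} (p : Quiver.Path a b)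
    (e' : b ⟶ b') (e : b' ⟶ c) :
    leadProj ((p.cons e').cons e) = leadProj (p.cons e') := by
  simp [leadProj]

theorem leadProj_cons {G : GenData} {a b c : FreeOb G} {p : Quiver.Path a b}
    (hp : leadProj p) (e : b ⟶ c) : leadProj (p.cons e) := by
  cases p with
  | nil => rw [leadProj_nil] at hp; exact hp.elim
  | cons q f => rw [leadProj_cons_cons]; exact hp

theorem leadProj_split {G : GenData} :
    ∀ {a : Ob} {c : FreeOb G} (χ : Quiver.Path (fOb G a) c), leadProj χ →
      ∃ (h : 1 < (Ob.val a : ℕ)) (k : Fin (Ob.val a)) (rest : Quiver.Path (fOb G ⟨1⟩) c),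
        χ = Quiver.Path.comp (projP G h k) rest
  | a, _, .nil, h => absurd h (by rw [leadProj_nil]; exact not_false)
  | a, c, .cons (.nil) e, h => by
      rw [leadProj_single] at h
      obtain ⟨hlt, k, hr, he⟩ := isProjArr_split e h
      have hc : c = (⟨1⟩ : Ob) := by
        obtain ⟨cv⟩ := c
        have hv : cv = 1 := hr
        subst hv
        rfl
      subst hc
      refine ⟨hlt, k, .nil, ?_⟩
      rw [eq_of_heq he]
      rfl
  | a, c, .cons (.cons q f) e, h => by
      rw [leadProj_cons_cons] at h
      obtain ⟨hlt, k, rest, hr⟩ := leadProj_split (Quiver.Path.cons q f) h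
      exact ⟨hlt, k, rest.cons e, by rw [hr]; rfl⟩

theorem leadProj_proj_comp {G : GenData} {a : Ob} (h : 1 < (Ob.val a : ℕ))
    (k : Fin (Ob.val a)) :
    ∀ {c : FreeOb G} (rest : Quiver.Path (fOb G ⟨1⟩) c),
    leadProj (Quiver.Path.comp (projP G h k) rest) := by
  intro c rest
  induction rest with
  | nil =>
    show leadProj ((Quiver.Path.nil.cons _))
    exact Eq.mpr (leadProj_single (projArrOb G h k)) trivial
  | cons r e ih => exact leadProj_cons ih e

theorem comp_toPath_inj {V : Type} [Quiver.{0} V] {a c : V} :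
    ∀ {t₁ t₂ : V} (e₁ : a ⟶ t₁) (e₂ : a ⟶ t₂) (p₁ : Quiver.Path t₁ c) (p₂ : Quiver.Path t₂ c),
      e₁.toPath.comp p₁ = e₂.toPath.comp p₂ → t₁ = t₂ ∧ HEq e₁ e₂ ∧ HEq p₁ p₂ := by
  intro t₁ t₂ e₁ e₂ p₁ p₂
  induction p₁ generalizing t₂ with
  | nil =>
    cases p₂ with
    | nil =>
      intro h
      have h' : Quiver.Path.cons (Quiver.Path.nil) e₁ = Quiver.Path.cons (Quiver.Path.nil) e₂ :=
        h
      injection h' with h1 h2 h3 h4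
      exact ⟨rfl, heq_of_eq h4, HEq.rfl⟩
    | cons q f =>
      intro h
      exfalso
      have := congrArg Quiver.Path.length h
      simp [Quiver.Path.length_comp, Quiver.Hom.toPath] at this
  | cons q f ih =>
    cases p₂ with
    | nil =>
      intro h
      exfalso
      have := congrArg Quiver.Path.length h
      simp [Quiver.Path.length_comp, Quiver.Hom.toPath] at this
    | cons r g =>
      intro h
      have h' : Quiver.Path.cons (e₁.toPath.comp q) f = Quiver.Path.cons (e₂.toPath.comp r) g :=
        h
      injection h' with h1 h2 h3 h4
      subst h1
      obtain ⟨ht, he, hp⟩ := ih e₂ r (eq_of_heq h3)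
      subst ht
      refine ⟨rfl, he, ?_⟩
      rw [eq_of_heq hp, eq_of_heq h4]

/-! ### Decompositions of morphisms of the free semi-theory -/

/-- The action of `Jfree` on homs, with defeq-normalized endpoints. -/
def jMapF (G : GenData) {x y : Ob} (g : pST x ⟶ pST y) : fST G x ⟶ fST G y :=
  (Jfree G).map g

theorem jMapF_id (G : GenData) (s : Ob) : jMapF G (𝟙 (pST s)) = 𝟙 (fST G s) :=
  (Jfree G).map_id (pST s)

theorem jMapF_comp (G : GenData) {x y z : Ob} (g : pST x ⟶ pST y) (h : pST y ⟶ pST z) :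
    jMapF G (g ≫ h) = jMapF G g ≫ jMapF G h :=
  (Jfree G).map_comp g h

theorem jfree_map_toPath (G : GenData) {a b : FreeOb emptyGen} (e : a ⟶ b) :
    (Jfree G).map e.toPath = jArr G e :=
  Paths.lift_toPath _ _

theorem jMapF_projPP (G : GenData) {a : Ob} (h : 1 < (Ob.val a : ℕ)) (k : Fin (Ob.val a)) :
    jMapF G (projPP h k) = projP G h k := by
  show (Jfree G).map (projArrOb emptyGen h k).toPath = _
  rw [jfree_map_toPath]
  rfl

/-- A morphism starts with a projection (hom-typed version). -/
def leadProjH {G : GenData} {s : Ob} {c : FreeST G} (ψ : fST G s ⟶ c) : Prop :=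
  leadProj (show Quiver.Path (fOb G s) c from ψ)

theorem emptyArr_cases {m r : ℕ+} (e : Arr emptyGen m r) :
    ∃ (h : 1 < (m : ℕ)) (k : Fin m) (_ : r = 1), HEq e (Arr.proj (G := emptyGen) h k) := by
  cases e with
  | gen g => exact g.elim
  | proj h k => exact ⟨h, k, rfl, HEq.rfl⟩

theorem P_path_cases :
    ∀ {a s : FreeOb emptyGen} (g : Quiver.Path a s),
      (∃ _ : s = a, HEq g (Quiver.Path.nil : Quiver.Path a a)) ∨
      (∃ (h : 1 < (Ob.val a : ℕ)) (k : Fin (Ob.val a)) (_ : s = fOb emptyGen ⟨1⟩),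
        HEq g (projArrOb emptyGen (a := a) h k).toPath)
  | _, _, .nil => Or.inl ⟨rfl, HEq.rfl⟩
  | a, s, .cons p e => by
    rcases P_path_cases p with ⟨hs, hg⟩ | ⟨h, k, hs, hg⟩
    · subst hs
      have hp : p = Quiver.Path.nil := eq_of_heq hg
      subst hp
      obtain ⟨h, k, hr, he⟩ := emptyArr_cases e
      have hc : s = (⟨1⟩ : Ob) := by
        obtain ⟨sv⟩ := s
        have hv : sv = 1 := hr
        subst hv
        rfl
      subst hc
      refine Or.inr ⟨h, k, rfl, ?_⟩
      rw [eq_of_heq he]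
      exact HEq.rfl
    · subst hs
      obtain ⟨h1, _, _, _⟩ := emptyArr_cases e
      exact absurd (show (1 : ℕ) < 1 from h1) (lt_irrefl 1)

theorem P_hom_cases {a s : Ob} (g : pST a ⟶ pST s) :
    (∃ _ : s = a, HEq g (𝟙 (pST a))) ∨
    (∃ (h : 1 < (Ob.val a : ℕ)) (k : Fin (Ob.val a)) (_ : s = (⟨1⟩ : Ob)),
      HEq g (projPP h k)) := by
  rcases P_path_cases (a := pST a) (s := pST s) g with ⟨hs, hg⟩ | ⟨h, k, hs, hg⟩
  · exact Or.inl ⟨hs, hg⟩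
  · exact Or.inr ⟨h, k, hs, hg⟩

/-- A reduced decomposition of a morphism `χ : J[a] ⟶ c` of the free semi-theory:
`χ = J(g) ≫ ψ` where `ψ` does not start with a projection (unless its source is `[1]`). -/
structure Decomp (G : GenData) {a : Ob} {c : FreeST G} (χ : fST G a ⟶ c) : Type where
  src : Ob
  g : pST a ⟶ pST src
  ψ : fST G src ⟶ c
  eq : χ = jMapF G g ≫ ψ
  red : Ob.val src = 1 ∨ ¬ leadProjH ψ

theorem decomp_unique {G : GenData} {a : Ob} {c : FreeST G} {χ : fST G a ⟶ c}
    (d₁ d₂ : Decomp G χ) :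
    d₁.src = d₂.src ∧ HEq d₁.g d₂.g ∧ HEq d₁.ψ d₂.ψ := by
  obtain ⟨s₁, g₁, ψ₁, e₁, r₁⟩ := d₁
  obtain ⟨s₂, g₂, ψ₂, e₂, r₂⟩ := d₂
  dsimp only at *
  rcases P_hom_cases g₁ with ⟨hs1, hg1⟩ | ⟨h1, k1, hs1, hg1⟩ <;>
  rcases P_hom_cases g₂ with ⟨hs2, hg2⟩ | ⟨h2, k2, hs2, hg2⟩
  · -- both identities
    subst hs1
    subst hs2
    have hg1' : g₁ = 𝟙 _ := eq_of_heq hg1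
    have hg2' : g₂ = 𝟙 _ := eq_of_heq hg2
    have e₁' : χ = ψ₁ := by rw [e₁, hg1', jMapF_id, Category.id_comp]
    have e₂' : χ = ψ₂ := by rw [e₂, hg2', jMapF_id, Category.id_comp]
    exact ⟨rfl, heq_of_eq (hg1'.trans hg2'.symm), heq_of_eq (e₁'.symm.trans e₂')⟩
  · -- identity vs projection: impossible
    exfalso
    subst hs1
    subst hs2
    have hg1' : g₁ = 𝟙 _ := eq_of_heq hg1
    have hg2' : g₂ = projPP h2 k2 := eq_of_heq hg2
    have e₁' : χ = ψ₁ := by rw [e₁, hg1', jMapF_id, Category.id_comp]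
    have hlp : leadProjH ψ₁ := by
      show leadProj (show Quiver.Path (fOb G s₁) _ from ψ₁)
      rw [show ψ₁ = χ from e₁'.symm, e₂, hg2', jMapF_projPP]
      exact leadProj_proj_comp h2 k2 _
    rcases r₁ with hv | hnl
    · rw [hv] at h2
      norm_num at h2
    · exact hnl hlp
  · -- projection vs identity: impossible
    exfalso
    subst hs2
    subst hs1
    have hg2' : g₂ = 𝟙 _ := eq_of_heq hg2
    have hg1' : g₁ = projPP h1 k1 := eq_of_heq hg1
    have e₂' : χ = ψ₂ := by rw [e₂, hg2', jMapF_id, Category.id_comp]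
    have hlp : leadProjH ψ₂ := by
      show leadProj (show Quiver.Path (fOb G s₂) _ from ψ₂)
      rw [show ψ₂ = χ from e₂'.symm, e₁, hg1', jMapF_projPP]
      exact leadProj_proj_comp h1 k1 _
    rcases r₂ with hv | hnl
    · rw [hv] at h1
      norm_num at h1
    · exact hnl hlp
  · -- both projections
    subst hs1
    subst hs2
    have hg1' : g₁ = projPP h1 k1 := eq_of_heq hg1
    have hg2' : g₂ = projPP h2 k2 := eq_of_heq hg2
    have e₁' : χ = Quiver.Path.comp (projP G h1 k1) ψ₁ := by
      rw [e₁, hg1', jMapF_projPP]; rfl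
    have e₂' : χ = Quiver.Path.comp (projP G h2 k2) ψ₂ := by
      rw [e₂, hg2', jMapF_projPP]; rfl
    obtain ⟨_, heArr, hψ⟩ := comp_toPath_inj (V := FreeOb G) (projArrOb G h1 k1) (projArrOb G h2 k2) ψ₁ ψ₂
      (e₁'.symm.trans e₂')
    have heArr' : projArrOb G h1 k1 = projArrOb G h2 k2 := eq_of_heq heArr
    have heArr'' : (Arr.proj h1 k1 : Arr G (Ob.val a) 1) = Arr.proj h2 k2 := heArr'
    have hk : k1 = k2 := by injection heArr''
    subst hk
    refine ⟨rfl, ?_, hψ⟩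
    rw [hg1', hg2']

/-- Every morphism has a reduced decomposition. -/
theorem nonempty_decomp {G : GenData} {a : Ob} {c : FreeST G} (χ : fST G a ⟶ c) :
    Nonempty (Decomp G χ) := by
  by_cases h : leadProjH χ
  · obtain ⟨hlt, k, rest, hr⟩ :=
      leadProj_split (show Quiver.Path (fOb G a) c from χ) h
    refine ⟨⟨⟨1⟩, projPP hlt k, rest, ?_, Or.inl rfl⟩⟩
    rw [jMapF_projPP]
    exact hr
  · exact ⟨⟨a, 𝟙 (pST a), χ, by rw [jMapF_id, Category.id_comp], Or.inr h⟩⟩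

/-- A chosen reduced decomposition. -/
noncomputable def reduce {G : GenData} {a : Ob} {c : FreeST G} (χ : fST G a ⟶ c) :
    Decomp G χ :=
  (nonempty_decomp χ).some

/-! ### The explicit left Kan extension functor -/

/-- The index set of the coproduct computing the left Kan extension at `c`. -/
structure RedObj (G : GenData) (c : FreeST G) : Type where
  src : Ob
  ψ : fST G src ⟶ c
  red : Ob.val src = 1 ∨ ¬ leadProjH ψ

/-- The index associated to a decomposition. -/
def Decomp.idx {G : GenData} {a : Ob} {c : FreeST G} {χ : fST G a ⟶ c} (d : Decomp G χ) :
    RedObj G c :=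
  ⟨d.src, d.ψ, d.red⟩

/-- The value of the explicit left Kan extension at `c`. -/
def LObj (G : GenData) (X : PCat ⥤ SSet) (c : FreeST G) : SSet where
  obj x := Σ r : RedObj G c, (X.obj (pST r.src)).obj x
  map θ := TypeCat.ofHom fun p => ⟨p.1, (X.obj (pST p.1.src)).map θ p.2⟩
  map_id x := by
    apply ConcreteCategory.hom_ext; intro p
    have h2 : (X.obj (pST p.1.src)).map (𝟙 x) p.2 = p.2 := by
      rw [(X.obj (pST p.1.src)).map_id]; rfl
    exact congrArg (Sigma.mk p.1) h2
  map_comp θ η := by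
    apply ConcreteCategory.hom_ext; intro p
    have h2 : (X.obj (pST p.1.src)).map (θ ≫ η) p.2
        = (X.obj (pST p.1.src)).map η ((X.obj (pST p.1.src)).map θ p.2) := by
      rw [(X.obj (pST p.1.src)).map_comp]; rfl
    exact congrArg (Sigma.mk p.1) h2

theorem elt_eq_of_decomps {G : GenData} {X : PCat ⥤ SSet} {c : FreeST G}
    {x : SimplexCategoryᵒᵖ} {a : Ob} {χ : fST G a ⟶ c} (d d' : Decomp G χ)
    (v : (X.obj (pST a)).obj x) :
    (⟨d.idx, (X.map d.g).app x v⟩ : Σ r : RedObj G c, (X.obj (pST r.src)).obj x)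
      = ⟨d'.idx, (X.map d'.g).app x v⟩ := by
  obtain ⟨hs, hg, hψ⟩ := decomp_unique d d'
  obtain ⟨s, g, ψ, he, hr⟩ := d
  obtain ⟨s', g', ψ', he', hr'⟩ := d'
  dsimp only at hs hg hψ
  subst hs
  have hψ' := eq_of_heq hψ
  subst hψ'
  have hg' := eq_of_heq hg
  subst hg'
  rfl

/-- The functorial action of the explicit left Kan extension. -/
def LMapHom (G : GenData) (X : PCat ⥤ SSet) {c c' : FreeST G} (φ : c ⟶ c') :
    LObj G X c ⟶ LObj G X c' where
  app x := TypeCat.ofHom fun p => ⟨(reduce (p.1.ψ ≫ φ)).idx, (X.map (reduce (p.1.ψ ≫ φ)).g).app x p.2⟩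
  naturality x x' θ := by
    apply ConcreteCategory.hom_ext; intro p
    exact congrArg (Sigma.mk (reduce (p.1.ψ ≫ φ)).idx)
      (types_congr_hom ((X.map (reduce (p.1.ψ ≫ φ)).g).naturality θ) p.2)

/-- The explicit left Kan extension of a diagram along `Jfree G`. -/
def LFunObj (G : GenData) (X : PCat ⥤ SSet) : FreeST G ⥤ SSet where
  obj := LObj G X
  map := LMapHom G X
  map_id c := by
    apply NatTrans.ext
    funext x; apply ConcreteCategory.hom_ext; intro p
    obtain ⟨⟨s, ψ, hred⟩, v⟩ := p
    have h2 : (X.map (𝟙 (pST s))).app x v = v := by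
      rw [X.map_id]; rfl
    refine (elt_eq_of_decomps (X := X) (reduce (ψ ≫ 𝟙 c))
      ⟨s, 𝟙 (pST s), ψ, by rw [jMapF_id, Category.id_comp, Category.comp_id], hred⟩ v).trans ?_
    show (⟨⟨s, ψ, hred⟩, (X.map (𝟙 (pST s))).app x v⟩ :
        Σ r : RedObj G c, (X.obj (pST r.src)).obj x) = _
    exact congrArg (Sigma.mk (β := fun r : RedObj G c => (X.obj (pST r.src)).obj x)
      ⟨s, ψ, hred⟩) h2
  map_comp {c c' c''} φ φ' := by
    apply NatTrans.ext
    funext x; apply ConcreteCategory.hom_ext; intro p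
    obtain ⟨⟨s, ψ, hred⟩, v⟩ := p
    set d₁ := reduce (ψ ≫ φ) with hd₁
    set d₂ := reduce (d₁.ψ ≫ φ') with hd₂
    have heq : ψ ≫ (φ ≫ φ') = jMapF G (d₁.g ≫ d₂.g) ≫ d₂.ψ :=
      calc ψ ≫ (φ ≫ φ') = (ψ ≫ φ) ≫ φ' := (Category.assoc ψ φ φ').symm
        _ = (jMapF G d₁.g ≫ d₁.ψ) ≫ φ' := congrArg (· ≫ φ') d₁.eq
        _ = jMapF G d₁.g ≫ (d₁.ψ ≫ φ') := Category.assoc _ _ _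
        _ = jMapF G d₁.g ≫ (jMapF G d₂.g ≫ d₂.ψ) := congrArg (jMapF G d₁.g ≫ ·) d₂.eq
        _ = (jMapF G d₁.g ≫ jMapF G d₂.g) ≫ d₂.ψ := (Category.assoc _ _ _).symm
        _ = jMapF G (d₁.g ≫ d₂.g) ≫ d₂.ψ := by rw [jMapF_comp]
    have hv : (X.map (d₁.g ≫ d₂.g)).app x v = (X.map d₂.g).app x ((X.map d₁.g).app x v) := by
      rw [X.map_comp]; rfl
    refine (elt_eq_of_decomps (X := X) (reduce (ψ ≫ (φ ≫ φ')))
      ⟨d₂.src, d₁.g ≫ d₂.g, d₂.ψ, heq, d₂.red⟩ v).trans ?_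
    show (⟨⟨d₂.src, d₂.ψ, d₂.red⟩, (X.map (d₁.g ≫ d₂.g)).app x v⟩ :
        Σ r : RedObj G c'', (X.obj (pST r.src)).obj x) = _
    exact congrArg (Sigma.mk (β := fun r : RedObj G c'' => (X.obj (pST r.src)).obj x)
      ⟨d₂.src, d₂.ψ, d₂.red⟩) hv

/-- The explicit left Kan extension functor. -/
def Lfun (G : GenData) : (PCat ⥤ SSet) ⥤ (FreeST G ⥤ SSet) where
  obj X := LFunObj G X
  map {X Y} f :=
    { app := fun c =>
        { app := fun x => TypeCat.ofHom fun p => ⟨p.1, (f.app (pST p.1.src)).app x p.2⟩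
          naturality := fun x x' θ => by
            apply ConcreteCategory.hom_ext; intro p
            exact congrArg (Sigma.mk p.1)
              (types_congr_hom ((f.app (pST p.1.src)).naturality θ) p.2) }
      naturality := fun c c' φ => by
        apply NatTrans.ext
        funext x; apply ConcreteCategory.hom_ext; intro p
        exact congrArg (Sigma.mk (reduce (p.1.ψ ≫ φ)).idx)
          (natApply f (reduce (p.1.ψ ≫ φ)).g x p.2) }
  map_id X := by
    apply NatTrans.ext; funext c; apply NatTrans.ext; funext x; apply ConcreteCategory.hom_ext; intro p; rfl
  map_comp f g := by
    apply NatTrans.ext; funext c; apply NatTrans.ext; funext x; apply ConcreteCategory.hom_ext; intro p; rfl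


/-! ### The adjunction between `Lfun` and restriction -/

/-- The restriction functor along `Jfree G`. -/
abbrev resJ (G : GenData) : (FreeST G ⥤ SSet) ⥤ (PCat ⥤ SSet) :=
  (Functor.whiskeringLeft PCat (FreeST G) SSet).obj (Jfree G)

theorem not_leadProjH_id {G : GenData} (s : Ob) : ¬ leadProjH (𝟙 (fST G s)) := by
  show ¬ leadProj (Quiver.Path.nil : Quiver.Path (fOb G s) (fOb G s))
  rw [leadProj_nil]
  exact not_false

/-- The canonical index. -/
def trivRed (G : GenData) (a : Ob) : RedObj G ((Jfree G).obj (pST a)) :=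
  ⟨a, 𝟙 (fST G a), Or.inr (not_leadProjH_id a)⟩

/-- The unit of the adjunction. -/
def Lunit (G : GenData) : 𝟭 (PCat ⥤ SSet) ⟶ Lfun G ⋙ resJ G where
  app X :=
    { app := fun a =>
        { app := fun x => TypeCat.ofHom fun v => ⟨trivRed G a, v⟩
          naturality := fun x x' θ => by apply ConcreteCategory.hom_ext; intro v; rfl }
      naturality := fun a b g => by
        apply NatTrans.ext
        funext x; apply ConcreteCategory.hom_ext; intro v
        have heq : 𝟙 (fST G a) ≫ (Jfree G).map g = jMapF G g ≫ 𝟙 (fST G b) := by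
          exact (Category.id_comp _).trans (Category.comp_id _).symm
        exact ((elt_eq_of_decomps (X := X) (reduce (𝟙 (fST G a) ≫ (Jfree G).map g))
          ⟨b, g, 𝟙 (fST G b), heq, Or.inr (not_leadProjH_id b)⟩ v).trans
          (congrArg (Sigma.mk (β := fun r : RedObj G ((Jfree G).obj b) =>
            (X.obj (pST r.src)).obj x) ⟨b, 𝟙 (fST G b), Or.inr (not_leadProjH_id b)⟩)
            rfl)).symm }
  naturality X Y f := by
    apply NatTrans.ext; funext a; apply NatTrans.ext; funext x; apply ConcreteCategory.hom_ext; intro v; rfl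

theorem mapcomp_app {C : Type} [Category C] (Z : C ⥤ SSet) {A B C' : C} (f : A ⟶ B)
    (g : B ⟶ C') (x : SimplexCategoryᵒᵖ) (v : (Z.obj A).obj x) :
    (Z.map g).app x ((Z.map f).app x v) = (Z.map (f ≫ g)).app x v := by
  rw [Z.map_comp]; rfl

/-- The counit of the adjunction. -/
def Lcounit (G : GenData) : resJ G ⋙ Lfun G ⟶ 𝟭 (FreeST G ⥤ SSet) where
  app Z :=
    { app := fun c =>
        { app := fun x => TypeCat.ofHom fun p => (Z.map p.1.ψ).app x p.2
          naturality := fun x x' θ => by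
            apply ConcreteCategory.hom_ext; intro p
            exact types_congr_hom ((Z.map p.1.ψ).naturality θ) p.2 }
      naturality := fun c c' φ => by
        apply NatTrans.ext
        funext x; apply ConcreteCategory.hom_ext; intro p
        show (Z.map (reduce (p.1.ψ ≫ φ)).ψ).app x
            ((Z.map (jMapF G (reduce (p.1.ψ ≫ φ)).g)).app x p.2)
          = (Z.map φ).app x ((Z.map p.1.ψ).app x p.2)
        rw [mapcomp_app Z (jMapF G (reduce (p.1.ψ ≫ φ)).g) (reduce (p.1.ψ ≫ φ)).ψ x p.2,
          mapcomp_app Z p.1.ψ φ x p.2, ← (reduce (p.1.ψ ≫ φ)).eq] }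
  naturality Z Z' t := by
    apply NatTrans.ext
    funext c
    apply NatTrans.ext
    funext x; apply ConcreteCategory.hom_ext; intro p
    exact (natApply t p.1.ψ x p.2).symm

/-- The adjunction between the explicit left Kan extension and restriction. -/
noncomputable def Ladj (G : GenData) : Lfun G ⊣ resJ G :=
  Adjunction.mkOfUnitCounit
    { unit := Lunit G
      counit := Lcounit G
      left_triangle := by
        apply NatTrans.ext
        funext X
        apply NatTrans.ext
        funext c
        apply NatTrans.ext
        funext x; apply ConcreteCategory.hom_ext; intro p
        obtain ⟨⟨s, ψ, hred⟩, v⟩ := p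
        have heq : 𝟙 (fST G s) ≫ ψ = jMapF G (𝟙 (pST s)) ≫ ψ := by rw [jMapF_id]
        have h2 : (X.map (𝟙 (pST s))).app x v = v := by rw [X.map_id]; rfl
        refine (elt_eq_of_decomps (X := X) (reduce (𝟙 (fST G s) ≫ ψ))
          ⟨s, 𝟙 (pST s), ψ, heq, hred⟩ v).trans ?_
        show (⟨⟨s, ψ, hred⟩, (X.map (𝟙 (pST s))).app x v⟩ :
            Σ r : RedObj G c, (X.obj (pST r.src)).obj x) = _
        exact congrArg (Sigma.mk (β := fun r : RedObj G c => (X.obj (pST r.src)).obj x)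
          ⟨s, ψ, hred⟩) h2
      right_triangle := by
        apply NatTrans.ext
        funext Z
        apply NatTrans.ext
        funext a
        apply NatTrans.ext
        funext x; apply ConcreteCategory.hom_ext; intro v
        show (Z.map (𝟙 (fST G a))).app x v = v
        rw [CategoryTheory.Functor.map_id]
        rfl }


/-- The explicit functor agrees with the abstract left Kan extension. -/
noncomputable def LIsoLan (G : GenData) : Lfun G ≅ (Jfree G).lan :=
  (Ladj G).leftAdjointUniq ((Jfree G).lanAdjunction SSet)

theorem lan_map_eq (G : GenData) {X Y : PCat ⥤ SSet} (f : X ⟶ Y) :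
    (Jfree G).lan.map f
      = (LIsoLan G).inv.app X ≫ (Lfun G).map f ≫ (LIsoLan G).hom.app Y := by
  have h := (LIsoLan G).hom.naturality f
  rw [h, ← Category.assoc, Iso.inv_hom_id_app, Category.id_comp]

theorem lan_map_app_eq (G : GenData) {X Y : PCat ⥤ SSet} (f : X ⟶ Y) (c : FreeST G) :
    ((Jfree G).lan.map f).app c
      = ((LIsoLan G).inv.app X).app c ≫ ((Lfun G).map f).app c
          ≫ ((LIsoLan G).hom.app Y).app c := by
  rw [lan_map_eq G f]
  rfl


/-! ### Weak homotopy equivalences: basic stability properties -/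

theorem ZerothHomotopy.map_id' (X : Type) [TopologicalSpace X] :
    ZerothHomotopy.map (ContinuousMap.id X) = id := by
  funext q
  induction q using Quotient.ind
  rfl

theorem ZerothHomotopy.map_comp' {X Y Z : Type} [TopologicalSpace X] [TopologicalSpace Y]
    [TopologicalSpace Z] (f : C(X, Y)) (g : C(Y, Z)) :
    ZerothHomotopy.map (g.comp f) = ZerothHomotopy.map g ∘ ZerothHomotopy.map f := by
  funext q
  induction q using Quotient.ind
  rfl

theorem HomotopyGroup.map_id' {X : Type} [TopologicalSpace X] (N : Type) (x : X) :
    HomotopyGroup.map (ContinuousMap.id X) N x = id := by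
  funext q
  induction q using Quotient.ind
  rfl

theorem HomotopyGroup.map_comp' {X Y Z : Type} [TopologicalSpace X] [TopologicalSpace Y]
    [TopologicalSpace Z] (f : C(X, Y)) (g : C(Y, Z)) (N : Type) (x : X) :
    HomotopyGroup.map (g.comp f) N x
      = HomotopyGroup.map g N (f x) ∘ HomotopyGroup.map f N x := by
  funext q
  induction q using Quotient.ind
  rfl

theorem hgMap_bij_of_inverse {X Y : Type} [TopologicalSpace X] [TopologicalSpace Y]
    (f : C(X, Y)) (g : C(Y, X)) (hgf : g.comp f = ContinuousMap.id X)
    (hfg : f.comp g = ContinuousMap.id Y) (N : Type) (x : X) :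
    Function.Bijective (HomotopyGroup.map f N x) := by
  constructor
  · intro a b hab
    have h3 : HomotopyGroup.map (g.comp f) N x a = HomotopyGroup.map (g.comp f) N x b := by
      rw [HomotopyGroup.map_comp']
      exact congrArg (HomotopyGroup.map g N (f x)) hab
    rw [hgf, HomotopyGroup.map_id'] at h3
    exact h3
  · have hsc : Function.Surjective (HomotopyGroup.map (f.comp g) N (f x)) := by
      rw [hfg, HomotopyGroup.map_id']
      exact Function.surjective_id
    rw [HomotopyGroup.map_comp'] at hsc
    have hs2 := Function.Surjective.of_comp hsc
    have hx : g (f x) = x := DFunLike.congr_fun hgf x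
    rw [← hx]
    exact hs2

theorem zMap_bij_of_inverse {X Y : Type} [TopologicalSpace X] [TopologicalSpace Y]
    (f : C(X, Y)) (g : C(Y, X)) (hgf : g.comp f = ContinuousMap.id X)
    (hfg : f.comp g = ContinuousMap.id Y) :
    Function.Bijective (ZerothHomotopy.map f) := by
  constructor
  · intro a b hab
    have h3 : ZerothHomotopy.map (g.comp f) a = ZerothHomotopy.map (g.comp f) b := by
      rw [ZerothHomotopy.map_comp']
      exact congrArg (ZerothHomotopy.map g) hab
    rw [hgf, ZerothHomotopy.map_id'] at h3
    exact h3
  · have hsc : Function.Surjective (ZerothHomotopy.map (f.comp g)) := by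
      rw [hfg, ZerothHomotopy.map_id']
      exact Function.surjective_id
    rw [ZerothHomotopy.map_comp'] at hsc
    exact Function.Surjective.of_comp hsc

theorem IWHE_comp {X Y Z : TopCat} {f : X ⟶ Y} {g : Y ⟶ Z}
    (hf : IsWeakHomotopyEquiv f) (hg : IsWeakHomotopyEquiv g) :
    IsWeakHomotopyEquiv (f ≫ g) := by
  constructor
  · rw [show (f ≫ g).hom = g.hom.comp f.hom from rfl,
      ZerothHomotopy.map_comp']
    exact hg.1.comp hf.1
  · intro n x
    rw [show (f ≫ g).hom = g.hom.comp f.hom from rfl,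
      HomotopyGroup.map_comp']
    exact (hg.2 n (f x)).comp (hf.2 n x)

theorem IWHE_of_iso {X Y : TopCat} (f : X ⟶ Y) [IsIso f] : IsWeakHomotopyEquiv f := by
  have h1 : (inv f).hom.comp f.hom = ContinuousMap.id X := by
    ext p
    exact CategoryTheory.ConcreteCategory.congr_hom (IsIso.hom_inv_id f) p
  have h2 : f.hom.comp (inv f).hom = ContinuousMap.id Y := by
    ext p
    exact CategoryTheory.ConcreteCategory.congr_hom (IsIso.inv_hom_id f) p
  exact ⟨zMap_bij_of_inverse _ _ h1 h2, fun n x => hgMap_bij_of_inverse _ _ h1 h2 (Fin n) x⟩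

theorem weakEquiv_conj {A B A' B' : SSet} (e : A' ⟶ A) (m : A ⟶ B) (e' : B ⟶ B')
    [IsIso e] [IsIso e'] (hm : WeakEquiv m) : WeakEquiv (e ≫ m ≫ e') := by
  show IsWeakHomotopyEquiv (SSet.toTop.map (e ≫ m ≫ e'))
  rw [Functor.map_comp, Functor.map_comp]
  exact IWHE_comp (IWHE_of_iso _) (IWHE_comp hm (IWHE_of_iso _))

/-! ### The zeroth homotopy group as path components -/

/-- Comparison from the 0-th homotopy group to path components. -/
def hgZero {X : Type} [TopologicalSpace X] (x : X) :
    HomotopyGroup (Fin 0) X x → ZerothHomotopy X :=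
  Quotient.map (fun γ => γ.1 (fun i => i.elim0))
    (by
      intro γ γ' h
      obtain ⟨H⟩ := h
      exact ⟨{ toFun := fun t => H (t, fun i => i.elim0)
               continuous_toFun := H.continuous.comp (continuous_id.prodMk continuous_const)
               source' := H.apply_zero _
               target' := H.apply_one _ }⟩)

theorem hgZero_bij {X : Type} [TopologicalSpace X] (x : X) :
    Function.Bijective (hgZero x) := by
  constructor
  · intro q q'
    refine Quotient.inductionOn₂ q q' ?_
    intro γ γ' h
    obtain ⟨σ⟩ : Joined (γ.1 (fun i => i.elim0)) (γ'.1 (fun i => i.elim0)) := Quotient.exact h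
    refine Quotient.sound ?_
    exact ⟨{ toFun := fun t0 => σ t0.fst
             continuous_toFun := σ.continuous.comp continuous_fst
             map_zero_left := fun y =>
               σ.source.trans (congrArg γ.1 (Subsingleton.elim _ _))
             map_one_left := fun y =>
               σ.target.trans (congrArg γ'.1 (Subsingleton.elim _ _))
             prop' := fun t y hy => hy.elim fun i _ => i.elim0 }⟩
  · intro q
    refine Quotient.inductionOn q ?_
    intro p
    exact ⟨Quotient.mk _ ⟨ContinuousMap.const _ p, fun y hy => hy.elim fun i _ => i.elim0⟩, rfl⟩

theorem hgZero_nat {X Y : Type} [TopologicalSpace X] [TopologicalSpace Y] (f : C(X, Y))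
    (x : X) (q : HomotopyGroup (Fin 0) X x) :
    hgZero (f x) (HomotopyGroup.map f (Fin 0) x q) = ZerothHomotopy.map f (hgZero x q) := by
  induction q using Quotient.ind
  rfl

/-! ### Weak homotopy equivalences and disjoint unions -/

/-- The disjoint union of a family of continuous maps. -/
def sigmaCMap {ι : Type} {A B : ι → Type} [∀ i, TopologicalSpace (A i)]
    [∀ i, TopologicalSpace (B i)] (f : ∀ i, C(A i, B i)) :
    C((Σ i, A i), (Σ i, B i)) :=
  ⟨_root_.Sigma.map id (fun i => f i), Continuous.sigma_map (fun i => (f i).continuous)⟩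

theorem sigma_snd_eq {ι : Type*} {A : ι → Type*} {i : ι} {a b : A i}
    (h : (⟨i, a⟩ : Σ i, A i) = ⟨i, b⟩) : a = b := by
  injection h with h1 h2

theorem joined_sigma_fst {ι : Type} {A : ι → Type} [∀ i, TopologicalSpace (A i)]
    {i j : ι} {a : A i} {b : A j} (h : Joined (⟨i, a⟩ : Σ i, A i) ⟨j, b⟩) : i = j := by
  obtain ⟨γ⟩ := h
  obtain ⟨k, g, hg⟩ := ContinuousMap.exists_lift_sigma γ.toContinuousMap
  have h0 : (⟨i, a⟩ : Σ i, A i) = ⟨k, g 0⟩ := γ.source.symm.trans (DFunLike.congr_fun hg 0)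
  have h1 : (⟨j, b⟩ : Σ i, A i) = ⟨k, g 1⟩ := γ.target.symm.trans (DFunLike.congr_fun hg 1)
  exact (congrArg _root_.Sigma.fst h0).trans (congrArg _root_.Sigma.fst h1).symm

theorem joined_sigma_of_eq {ι : Type} {A : ι → Type} [∀ i, TopologicalSpace (A i)]
    {i : ι} {a b : A i} (h : Joined (⟨i, a⟩ : Σ i, A i) ⟨i, b⟩) : Joined a b := by
  obtain ⟨γ⟩ := h
  obtain ⟨k, g, hg⟩ := ContinuousMap.exists_lift_sigma γ.toContinuousMap
  have h0 : (⟨i, a⟩ : Σ i, A i) = ⟨k, g 0⟩ := γ.source.symm.trans (DFunLike.congr_fun hg 0)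
  have h1 : (⟨i, b⟩ : Σ i, A i) = ⟨k, g 1⟩ := γ.target.symm.trans (DFunLike.congr_fun hg 1)
  have hk : i = k := congrArg _root_.Sigma.fst h0
  subst hk
  exact ⟨{ toContinuousMap := g
           source' := (sigma_snd_eq h0).symm
           target' := (sigma_snd_eq h1).symm }⟩

theorem zmap_sigma_bij {ι : Type} {A B : ι → Type} [∀ i, TopologicalSpace (A i)]
    [∀ i, TopologicalSpace (B i)] (f : ∀ i, C(A i, B i))
    (hf : ∀ i, Function.Bijective (ZerothHomotopy.map (f i))) :
    Function.Bijective (ZerothHomotopy.map (sigmaCMap f)) := by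
  constructor
  · intro q q'
    refine Quotient.inductionOn₂ q q' ?_
    rintro ⟨i, a⟩ ⟨j, b⟩ h
    have hj : Joined (⟨i, f i a⟩ : Σ i, B i) ⟨j, f j b⟩ := Quotient.exact h
    obtain rfl : i = j := joined_sigma_fst hj
    have hab : Joined (f i a) (f i b) := joined_sigma_of_eq hj
    have h5 : ZerothHomotopy.map (f i) (Quotient.mk _ a) = ZerothHomotopy.map (f i)
        (Quotient.mk _ b) := Quotient.sound hab
    obtain ⟨σ⟩ : Joined a b := Quotient.exact ((hf i).1 h5)
    exact Quotient.sound ⟨σ.map continuous_sigmaMk⟩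
  · intro q
    refine Quotient.inductionOn q ?_
    rintro ⟨j, b⟩
    obtain ⟨qa, hqa⟩ := (hf j).2 (Quotient.mk _ b)
    obtain ⟨a, ha⟩ := Quotient.exists_rep qa
    have h5 : (Quotient.mk _ (f j a) : ZerothHomotopy (B j)) = Quotient.mk _ b := by
      rw [show (Quotient.mk _ (f j a) : ZerothHomotopy (B j))
          = ZerothHomotopy.map (f j) (Quotient.mk _ a) from rfl, ha, hqa]
    obtain ⟨σ⟩ : Joined (f j a) b := Quotient.exact h5
    exact ⟨Quotient.mk _ ⟨j, a⟩, Quotient.sound ⟨σ.map continuous_sigmaMk⟩⟩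

theorem hgMap_sigmaMk_bij {ι : Type} {A : ι → Type} [∀ i, TopologicalSpace (A i)]
    (n : ℕ) (hn : 0 < n) (i : ι) (a : A i) :
    Function.Bijective
      (HomotopyGroup.map (ContinuousMap.sigmaMk (X := A) i) (Fin n) a) := by
  constructor
  · intro q q'
    refine Quotient.inductionOn₂ q q' ?_
    intro γ γ' h
    obtain ⟨H⟩ := Quotient.exact h
    obtain ⟨k, G, hG⟩ := ContinuousMap.exists_lift_sigma H.toContinuousMap
    have hpt : ∀ p, H.toContinuousMap p = (⟨k, G p⟩ : Σ i, A i) := fun p =>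
      DFunLike.congr_fun hG p
    have hk : k = i := by
      have h1 : H.toContinuousMap (0, fun _ => 0)
          = (⟨i, γ.1 (fun _ => 0)⟩ : Σ i, A i) := H.apply_zero _
      exact congrArg _root_.Sigma.fst ((hpt (0, fun _ => 0)).symm.trans h1)
    subst hk
    refine Quotient.sound ⟨{ toContinuousMap := G
                             map_zero_left := fun y => ?_
                             map_one_left := fun y => ?_
                             prop' := fun t y hy => ?_ }⟩
    · have h1 : (⟨k, G (0, y)⟩ : Σ i, A i) = ⟨k, γ.1 y⟩ :=
        (hpt (0, y)).symm.trans (H.apply_zero y)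
      exact sigma_snd_eq h1
    · have h1 : (⟨k, G (1, y)⟩ : Σ i, A i) = ⟨k, γ'.1 y⟩ :=
        (hpt (1, y)).symm.trans (H.apply_one y)
      exact sigma_snd_eq h1
    · have h1 : (⟨k, G (t, y)⟩ : Σ i, A i) = ⟨k, γ.1 y⟩ :=
        (hpt (t, y)).symm.trans (H.eq_fst t hy)
      exact sigma_snd_eq h1
  · intro q
    refine Quotient.inductionOn q ?_
    intro δ
    obtain ⟨k, g, hg⟩ := ContinuousMap.exists_lift_sigma δ.1
    have hy0 : (fun _ => 0 : Fin n → unitInterval) ∈ Cube.boundary (Fin n) := ⟨⟨0, hn⟩, Or.inl rfl⟩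
    have hk : k = i := by
      have h0 := DFunLike.congr_fun hg (fun _ => 0)
      have h1 : δ.1 (fun _ => 0) = (⟨i, a⟩ : Σ i, A i) := δ.2 _ hy0
      exact congrArg _root_.Sigma.fst (h0.symm.trans h1)
    subst hk
    have hbd : ∀ y ∈ Cube.boundary (Fin n), g y = a := by
      intro y hy
      have h0 := DFunLike.congr_fun hg y
      have h1 : δ.1 y = (⟨k, a⟩ : Σ i, A i) := δ.2 y hy
      have h2 : (⟨k, g y⟩ : Σ i, A i) = ⟨k, a⟩ := h0.symm.trans h1
      exact sigma_snd_eq h2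
    refine ⟨Quotient.mk _ ⟨g, hbd⟩, ?_⟩
    exact congrArg (Quotient.mk _) (Subtype.ext hg.symm)

theorem bij_of_comp {α β γ : Type} {F : β → γ} {u : α → β} (hu : Function.Bijective u)
    (hw : Function.Bijective (F ∘ u)) : Function.Bijective F := by
  constructor
  · intro x y h
    obtain ⟨x', rfl⟩ := hu.2 x
    obtain ⟨y', rfl⟩ := hu.2 y
    rw [hw.1 (show (F ∘ u) x' = (F ∘ u) y' from h)]
  · intro b
    obtain ⟨x', hx⟩ := hw.2 b
    exact ⟨u x', hx⟩

theorem hgMap_sigma_bij {ι : Type} {A B : ι → Type} [∀ i, TopologicalSpace (A i)]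
    [∀ i, TopologicalSpace (B i)] (f : ∀ i, C(A i, B i)) (n : ℕ) (hn : 0 < n)
    (i : ι) (a : A i)
    (hfi : Function.Bijective (HomotopyGroup.map (f i) (Fin n) a)) :
    Function.Bijective (HomotopyGroup.map (sigmaCMap f) (Fin n) (⟨i, a⟩ : Σ i, A i)) := by
  have hcomp : (sigmaCMap f).comp (ContinuousMap.sigmaMk i)
      = (ContinuousMap.sigmaMk (X := B) i).comp (f i) := rfl
  have h2 : Function.Bijective
      (HomotopyGroup.map ((sigmaCMap f).comp (ContinuousMap.sigmaMk i)) (Fin n) a) := by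
    rw [hcomp, HomotopyGroup.map_comp']
    exact (hgMap_sigmaMk_bij n hn i (f i a)).comp hfi
  rw [HomotopyGroup.map_comp'] at h2
  exact bij_of_comp (hgMap_sigmaMk_bij n hn i a) h2

theorem hgMap_sigma_bij0 {ι : Type} {A B : ι → Type} [∀ i, TopologicalSpace (A i)]
    [∀ i, TopologicalSpace (B i)] (f : ∀ i, C(A i, B i))
    (hf : ∀ i, Function.Bijective (ZerothHomotopy.map (f i))) (p : Σ i, A i) :
    Function.Bijective (HomotopyGroup.map (sigmaCMap f) (Fin 0) p) := by
  have hz := zmap_sigma_bij f hf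
  constructor
  · intro q q' h
    have h1 : ZerothHomotopy.map (sigmaCMap f) (hgZero p q)
        = ZerothHomotopy.map (sigmaCMap f) (hgZero p q') := by
      rw [← hgZero_nat, ← hgZero_nat, h]
    exact (hgZero_bij p).1 (hz.1 h1)
  · intro b
    obtain ⟨za, hza⟩ := hz.2 (hgZero _ b)
    obtain ⟨q, hq⟩ := (hgZero_bij p).2 za
    refine ⟨q, (hgZero_bij _).1 ?_⟩
    rw [hgZero_nat, hq, hza]

/-- The disjoint union of a family of spaces, as an object of `TopCat`. -/
def sigmaTop {ι : Type} (A : ι → TopCat.{0}) : TopCat :=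
  TopCat.of (Σ i, A i)

/-- The disjoint union of a family of maps, as a morphism of `TopCat`. -/
def sigmaMapTop {ι : Type} (A B : ι → TopCat.{0}) (f : ∀ i, A i ⟶ B i) :
    sigmaTop A ⟶ sigmaTop B :=
  TopCat.ofHom (sigmaCMap (fun i => (f i).hom))

theorem IWHE_sigmaMapTop {ι : Type} (A B : ι → TopCat.{0}) (f : ∀ i, A i ⟶ B i)
    (hf : ∀ i, IsWeakHomotopyEquiv (f i)) :
    IsWeakHomotopyEquiv (sigmaMapTop A B f) := by
  constructor
  · exact zmap_sigma_bij _ (fun i => (hf i).1)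
  · intro n x
    obtain ⟨i, a⟩ := x
    cases n with
    | zero => exact hgMap_sigma_bij0 (B := fun i => (B i : Type)) (fun i => (f i).hom) (fun i => (hf i).1) ⟨i, a⟩
    | succ m =>
        exact hgMap_sigma_bij (B := fun i => (B i : Type)) (fun i => (f i).hom) (m + 1) (Nat.succ_pos m) i a ((hf i).2 (m + 1) a)


/-! ### The explicit left Kan extension as a coproduct -/

/-- The family of simplicial sets indexed by reduced decompositions. -/
abbrev famX (G : GenData) (X : PCat ⥤ SSet) (c : FreeST G) : RedObj G c → SSet :=
  fun r => X.obj (pST r.src)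

/-- The coproduct inclusions. -/
def inclX (G : GenData) (X : PCat ⥤ SSet) (c : FreeST G) (r : RedObj G c) :
    famX G X c r ⟶ LObj G X c where
  app x := TypeCat.ofHom fun v => ⟨r, v⟩
  naturality x x' θ := by apply ConcreteCategory.hom_ext; intro v; rfl

/-- The cofan exhibiting `LObj G X c` as a coproduct. -/
def cofanX (G : GenData) (X : PCat ⥤ SSet) (c : FreeST G) : Limits.Cofan (famX G X c) :=
  Limits.Cofan.mk (LObj G X c) (inclX G X c)

/-- The cofan is a colimit. -/
def cofanX_isColimit (G : GenData) (X : PCat ⥤ SSet) (c : FreeST G) :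
    Limits.IsColimit (cofanX G X c) :=
  Limits.mkCofanColimit _
    (fun t =>
      { app := fun x => TypeCat.ofHom fun p => (t.inj p.1).app x p.2
        naturality := fun x x' θ => by
          apply ConcreteCategory.hom_ext; intro p
          exact types_congr_hom ((t.inj p.1).naturality θ) p.2 })
    (fun t r => by apply NatTrans.ext; funext x; apply ConcreteCategory.hom_ext; intro v; rfl)
    (fun t m hm => by
      apply NatTrans.ext
      funext x; apply ConcreteCategory.hom_ext; intro p
      obtain ⟨r, v⟩ := p
      exact types_congr_hom (NatTrans.congr_app (hm r) x) v)

/-- The family of spaces obtained by realization. -/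
abbrev famT (G : GenData) (X : PCat ⥤ SSet) (c : FreeST G) : RedObj G c → TopCat.{0} :=
  fun r => SSet.toTop.obj (famX G X c r)

/-- The realization of `LObj G X c` is a colimit cofan on the realized family. -/
noncomputable def tFanX_isColimit (G : GenData) (X : PCat ⥤ SSet) (c : FreeST G) :
    Limits.IsColimit (Limits.Cofan.mk (SSet.toTop.obj (LObj G X c))
      (fun r => SSet.toTop.map (inclX G X c r)) : Limits.Cofan (famT G X c)) := by
  haveI : Limits.PreservesColimitsOfSize.{0, 0} SSet.toTop :=
    sSetTopAdj.leftAdjoint_preservesColimits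
  exact Limits.isColimitCofanMkObjOfIsColimit SSet.toTop _ _ (cofanX_isColimit G X c)

/-- The comparison homeomorphism. -/
noncomputable def isoX (G : GenData) (X : PCat ⥤ SSet) (c : FreeST G) :
    SSet.toTop.obj (LObj G X c) ≅ TopCat.of (Σ r, famT G X c r) :=
  Limits.IsColimit.coconePointUniqueUpToIso (tFanX_isColimit G X c)
    (TopCat.sigmaCofanIsColimit (famT G X c))

theorem incl_nat (G : GenData) {X Y : PCat ⥤ SSet} (f : X ⟶ Y) (c : FreeST G)
    (r : RedObj G c) :
    inclX G X c r ≫ ((Lfun G).map f).app c = f.app (pST r.src) ≫ inclX G Y c r := by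
  apply NatTrans.ext
  funext x; apply ConcreteCategory.hom_ext; intro v
  rfl

theorem sigInc_nat (G : GenData) {X Y : PCat ⥤ SSet} (f : X ⟶ Y) (c : FreeST G)
    (r : RedObj G c) :
    TopCat.sigmaι (famT G X c) r ≫ sigmaMapTop (famT G X c) (famT G Y c)
        (fun r => SSet.toTop.map (f.app (pST r.src)))
      = SSet.toTop.map (f.app (pST r.src)) ≫ TopCat.sigmaι (famT G Y c) r := rfl

theorem square (G : GenData) {X Y : PCat ⥤ SSet} (f : X ⟶ Y) (c : FreeST G) :
    SSet.toTop.map (((Lfun G).map f).app c)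
      = (isoX G X c).hom
          ≫ sigmaMapTop (famT G X c) (famT G Y c)
              (fun r => SSet.toTop.map (f.app (pST r.src)))
          ≫ (isoX G Y c).inv := by
  refine Limits.Cofan.IsColimit.hom_ext (tFanX_isColimit G X c) _ _ (fun r => ?_)
  have h1 : SSet.toTop.map (inclX G X c r) ≫ (isoX G X c).hom = TopCat.sigmaι (famT G X c) r :=
    Limits.IsColimit.comp_coconePointUniqueUpToIso_hom (tFanX_isColimit G X c)
      (TopCat.sigmaCofanIsColimit (famT G X c)) ⟨r⟩
  have h2 : TopCat.sigmaι (famT G Y c) r ≫ (isoX G Y c).inv = SSet.toTop.map (inclX G Y c r) :=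
    Limits.IsColimit.comp_coconePointUniqueUpToIso_inv (tFanX_isColimit G Y c)
      (TopCat.sigmaCofanIsColimit (famT G Y c)) ⟨r⟩
  have s1 : SSet.toTop.map (inclX G X c r) ≫ SSet.toTop.map (((Lfun G).map f).app c)
      = SSet.toTop.map (f.app (pST r.src)) ≫ SSet.toTop.map (inclX G Y c r) :=
    (SSet.toTop.map_comp _ _).symm.trans
      ((congrArg SSet.toTop.map (incl_nat G f c r)).trans (SSet.toTop.map_comp _ _))
  have s2 : SSet.toTop.map (f.app (pST r.src)) ≫ SSet.toTop.map (inclX G Y c r)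
      = (SSet.toTop.map (f.app (pST r.src)) ≫ TopCat.sigmaι (famT G Y c) r) ≫ (isoX G Y c).inv :=
    (congrArg (SSet.toTop.map (f.app (pST r.src)) ≫ ·) h2.symm).trans (Category.assoc _ _ _).symm
  have s3 : (SSet.toTop.map (f.app (pST r.src)) ≫ TopCat.sigmaι (famT G Y c) r) ≫ (isoX G Y c).inv
      = SSet.toTop.map (inclX G X c r) ≫ (isoX G X c).hom
          ≫ sigmaMapTop (famT G X c) (famT G Y c)
              (fun r => SSet.toTop.map (f.app (pST r.src)))
          ≫ (isoX G Y c).inv :=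
    ((congrArg (· ≫ (isoX G Y c).inv) (sigInc_nat G f c r).symm).trans
      (Category.assoc _ _ _)).trans
      ((congrArg (· ≫ sigmaMapTop (famT G X c) (famT G Y c)
          (fun r => SSet.toTop.map (f.app (pST r.src))) ≫ (isoX G Y c).inv) h1.symm).trans
        (Category.assoc _ _ _))
  exact s1.trans (s2.trans s3)

theorem weakEquiv_Lfun (G : GenData) {X Y : PCat ⥤ SSet} (f : X ⟶ Y)
    (hw : ∀ a : PCat, WeakEquiv (f.app a)) (c : FreeST G) :
    WeakEquiv (((Lfun G).map f).app c) := by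
  show IsWeakHomotopyEquiv (SSet.toTop.map (((Lfun G).map f).app c))
  rw [square G f c]
  exact IWHE_comp (IWHE_of_iso (isoX G X c).hom)
    (IWHE_comp (IWHE_sigmaMapTop _ _ _ (fun r => hw (pST r.src))) (IWHE_of_iso (isoX G Y c).inv))

theorem mono_Lfun (G : GenData) {X Y : PCat ⥤ SSet} (f : X ⟶ Y)
    (hm : ∀ a : PCat, Mono (f.app a)) (c : FreeST G) :
    Mono (((Lfun G).map f).app c) := by
  rw [NatTrans.mono_iff_mono_app]
  intro x
  rw [CategoryTheory.mono_iff_injective]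
  intro p q hpq
  obtain ⟨r, v⟩ := p
  obtain ⟨r', v'⟩ := q
  have h1 : r = r' := congrArg _root_.Sigma.fst hpq
  subst h1
  have hpq' : (⟨r, (f.app (pST r.src)).app x v⟩ :
      Σ r : RedObj G c, (Y.obj (pST r.src)).obj x) = ⟨r, (f.app (pST r.src)).app x v'⟩ := hpq
  have h2 : (f.app (pST r.src)).app x v = (f.app (pST r.src)).app x v' := sigma_snd_eq (ι := RedObj G c)
    (A := fun r' => (Y.obj (pST r'.src)).obj x) hpq'
  have hinj : Function.Injective ((f.app (pST r.src)).app x) := by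
    rw [← CategoryTheory.mono_iff_injective]
    exact (NatTrans.mono_iff_mono_app (f.app (pST r.src))).mp (hm _) x
  have h3 : v = v' := hinj h2
  subst h3
  rfl

/-! ### STATEMENT 11
The left Kan extension along `J_C : P ⟶ C` preserves objectwise monomorphisms
and objectwise weak equivalences. -/
theorem lan_along_J_preserves_cofibrations_and_weak_equivalences (G : GenData)
    {X Y : PCat ⥤ SSet} (f : X ⟶ Y) :
    ((∀ a : PCat, Mono (f.app a)) →
      ∀ c : FreeST G, Mono (((Jfree G).lan.map f).app c)) ∧
    ((∀ a : PCat, WeakEquiv (f.app a)) →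
      ∀ c : FreeST G, WeakEquiv (((Jfree G).lan.map f).app c)) := by
  constructor
  · intro hm c
    rw [lan_map_app_eq G f c]
    haveI : Mono (((Lfun G).map f).app c) := mono_Lfun G f hm c
    infer_instance
  · intro hw c
    rw [lan_map_app_eq G f c]
    exact weakEquiv_conj _ _ _ (weakEquiv_Lfun G f hw c)

end SemiThPaper
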